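/- Let n, k_A, k_B, d_A, d_B be positive integers with d_A > d_B, and suppose 2^n > 2^{k_B}·(2^{k_A}−1)·V(n,d_A) + (2^{k_B}−1)·V(n,d_B). Then there exists a matrix G_0 ∈ F_2^{(k_A+k_B)×n} such that for all nonzero u ∈ F_2^{k_A+k_B}: if the first k_A coordinates of u are not all zero then the Hamming weight of u·G_0 is at least d_A + 1, and otherwise (so the last k_B coordinates are nonzero) the Hamming weight of u·G_0 is at least d_B + 1. -/

import Mathlib

/-- Volume of a Hamming ball of radius `r` in `𝔽₂ⁿ`. -/
def V (n r : ℕ) : ℕ := (Finset.range (r + 1)).sum fun k => n.choose k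

private lemma zmod2_eq_of_ne_iff {a b : ZMod 2} (h : a ≠ 0 ↔ b ≠ 0) : a = b := by
  revert h; revert a b; decide

private lemma zmod2_eq_one_of_ne {a : ZMod 2} (h : a ≠ 0) : a = 1 := by
  revert h; revert a; decide

/-- The number of vectors in `𝔽₂ⁿ` of Hamming weight at most `d` is at most `V n d`. -/
private lemma ball_card_le (n d : ℕ) :
    ((Finset.univ : Finset (Fin n → ZMod 2)).filter
      (fun v => hammingNorm v ≤ d)).card ≤ V n d := by
  classical
  have hT : ((Finset.univ : Finset (Finset (Fin n))).filter (fun s => s.card ≤ d)).card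
      = V n d := by
    have he : ((Finset.univ : Finset (Finset (Fin n))).filter (fun s => s.card ≤ d))
        = (Finset.range (d + 1)).biUnion
            (fun k => Finset.powersetCard k (Finset.univ : Finset (Fin n))) := by
      ext s
      simp only [Finset.mem_filter, Finset.mem_univ, true_and, Finset.mem_biUnion,
        Finset.mem_range, Finset.mem_powersetCard, Nat.lt_succ_iff]
      constructor
      · intro h; exact ⟨s.card, h, Finset.subset_univ s, rfl⟩
      · rintro ⟨k, hk, -, rfl⟩; exact hk
    rw [he, Finset.card_biUnion]
    · simp [V, Finset.card_powersetCard]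
    · intro x _ y _ hxy
      simp only [Finset.disjoint_left, Finset.mem_powersetCard]
      rintro s ⟨-, rfl⟩ ⟨-, h⟩
      exact hxy h
  rw [← hT]
  apply Finset.card_le_card_of_injOn (fun v => Finset.univ.filter (fun i => v i ≠ 0))
  · intro v hv
    simp only [Finset.mem_coe, Finset.mem_filter, Finset.mem_univ, true_and] at hv ⊢
    exact hv
  · intro v _ w _ h
    have h' : Finset.univ.filter (fun i => v i ≠ 0) = Finset.univ.filter (fun i => w i ≠ 0) := h
    funext i
    apply zmod2_eq_of_ne_iff
    constructor
    · intro hi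
      have : i ∈ Finset.univ.filter (fun i => v i ≠ 0) := by simp [hi]
      rw [h'] at this
      simpa using this
    · intro hi
      have : i ∈ Finset.univ.filter (fun i => w i ≠ 0) := by simp [hi]
      rw [← h'] at this
      simpa using this

/-- For a fixed nonzero message `u`, the number of generator matrices encoding `u`
with weight at most `d` is at most `2 ^ ((m-1) * n) * V n d`. -/
private lemma bad_card_le (m n d : ℕ) (u : Fin m → ZMod 2) (i₀ : Fin m) (hi : u i₀ ≠ 0) :
    ((Finset.univ : Finset (Matrix (Fin m) (Fin n) (ZMod 2))).filter
      (fun G => hammingNorm (Matrix.vecMul u G) ≤ d)).card ≤ 2 ^ ((m - 1) * n) * V n d := by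
  classical
  set S : Finset (({i : Fin m // i ≠ i₀} → Fin n → ZMod 2) × (Fin n → ZMod 2)) :=
    (Finset.univ : Finset ({i : Fin m // i ≠ i₀} → Fin n → ZMod 2)) ×ˢ
      ((Finset.univ : Finset (Fin n → ZMod 2)).filter (fun v => hammingNorm v ≤ d)) with hS
  have hcard : S.card ≤ 2 ^ ((m - 1) * n) * V n d := by
    rw [hS, Finset.card_product, Finset.card_univ]
    have h1 : Fintype.card ({i : Fin m // i ≠ i₀} → Fin n → ZMod 2) = 2 ^ ((m - 1) * n) := by
      rw [Fintype.card_fun, Fintype.card_fun]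
      have : Fintype.card {i : Fin m // i ≠ i₀} = m - 1 := by
        rw [Fintype.card_subtype_compl, Fintype.card_subtype_eq, Fintype.card_fin]
      rw [this, ZMod.card, Fintype.card_fin, ← pow_mul, mul_comm n (m-1)]
    rw [h1]
    exact Nat.mul_le_mul_left _ (ball_card_le n d)
  refine le_trans ?_ hcard
  apply Finset.card_le_card_of_injOn
    (fun G => (fun i : {i : Fin m // i ≠ i₀} => G i.1, Matrix.vecMul u G))
  · intro G hG
    simp only [Finset.mem_coe, Finset.mem_filter, Finset.mem_univ, true_and] at hG
    simp [hS, Finset.mem_product, hG]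
  · intro G hG G' hG' h
    have h1 : ∀ i : Fin m, i ≠ i₀ → G i = G' i := by
      intro i hi'
      exact congrFun (congrArg Prod.fst h) ⟨i, hi'⟩
    have h2 : Matrix.vecMul u G = Matrix.vecMul u G' := congrArg Prod.snd h
    have hrow : G i₀ = G' i₀ := by
      funext j
      have hj : ∑ i, u i * G i j = ∑ i, u i * G' i j := by
        have := congrFun h2 j
        simpa [Matrix.vecMul, dotProduct] using this
      have hsplit : ∀ H : Matrix (Fin m) (Fin n) (ZMod 2),
          ∑ i, u i * H i j
            = u i₀ * H i₀ j + ∑ i ∈ Finset.univ.erase i₀, u i * H i j := by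
        intro H
        exact (Finset.add_sum_erase _ (fun i => u i * H i j) (Finset.mem_univ i₀)).symm
      have herase : ∑ i ∈ Finset.univ.erase i₀, u i * G i j
          = ∑ i ∈ Finset.univ.erase i₀, u i * G' i j := by
        apply Finset.sum_congr rfl
        intro i hi'
        rw [h1 i (Finset.ne_of_mem_erase hi')]
      rw [hsplit G, hsplit G', herase] at hj
      have := add_right_cancel hj
      rwa [zmod2_eq_one_of_ne hi, one_mul, one_mul] at this
    funext i j
    by_cases hii : i = i₀
    · rw [hii, hrow]
    · rw [h1 i hii]

/-- The two-level UEP GV bound is achieved by linear codes: there is a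
generator matrix `G₀` such that every nonzero message whose first `k_A`
coordinates are not all zero is encoded with Hamming weight `> d_A`, and
every other nonzero message is encoded with Hamming weight `> d_B`. -/
theorem luep_gv_bound (n kA kB dA dB : ℕ) (hd : dB < dA)
    (hsize : 2 ^ kB * (2 ^ kA - 1) * V n dA + (2 ^ kB - 1) * V n dB < 2 ^ n) :
    ∃ G₀ : Matrix (Fin (kA + kB)) (Fin n) (ZMod 2),
      ∀ u : Fin (kA + kB) → ZMod 2, u ≠ 0 →
        ((∃ i : Fin (kA + kB), i.val < kA ∧ u i ≠ 0) →
            dA + 1 ≤ hammingNorm (Matrix.vecMul u G₀)) ∧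
        ((¬ ∃ i : Fin (kA + kB), i.val < kA ∧ u i ≠ 0) →
            dB + 1 ≤ hammingNorm (Matrix.vecMul u G₀)) := by
  classical
  by_cases hm : kA + kB = 0
  · refine ⟨0, fun u hu => absurd ?_ hu⟩
    funext i
    exact absurd i.isLt (by omega)
  -- the set of "bad" matrices
  set UA : Finset (Fin (kA + kB) → ZMod 2) :=
    Finset.univ.filter (fun u => ∃ i : Fin (kA + kB), i.val < kA ∧ u i ≠ 0) with hUA
  set UB : Finset (Fin (kA + kB) → ZMod 2) :=
    Finset.univ.filter
      (fun u => u ≠ 0 ∧ ¬ ∃ i : Fin (kA + kB), i.val < kA ∧ u i ≠ 0) with hUB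
  set Mb : (Fin (kA + kB) → ZMod 2) → ℕ → Finset (Matrix (Fin (kA+kB)) (Fin n) (ZMod 2)) :=
    fun u d => Finset.univ.filter (fun G => hammingNorm (Matrix.vecMul u G) ≤ d) with hMb
  set Bad : Finset (Matrix (Fin (kA+kB)) (Fin n) (ZMod 2)) :=
    UA.biUnion (fun u => Mb u dA) ∪ UB.biUnion (fun u => Mb u dB) with hBad
  -- cardinality of UA
  have hUAcard : UA.card ≤ (2 ^ kA - 1) * 2 ^ kB := by
    have : (2 ^ kA - 1) * 2 ^ kB =
        ((Finset.univ.filter (fun a : Fin kA → ZMod 2 => a ≠ 0)) ×ˢ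
          (Finset.univ : Finset (Fin kB → ZMod 2))).card := by
      rw [Finset.card_product, Finset.filter_ne', Finset.card_erase_of_mem (Finset.mem_univ 0)]
      simp [Fintype.card_fun, ZMod.card]
    rw [this]
    apply Finset.card_le_card_of_injOn
      (fun u => (fun i : Fin kA => u (Fin.castAdd kB i), fun i : Fin kB => u (Fin.natAdd kA i)))
    · intro u hu
      rw [hUA] at hu
      simp only [Finset.mem_coe, Finset.mem_filter, Finset.mem_univ, true_and] at hu
      obtain ⟨i, hik, hiu⟩ := hu
      simp only [Finset.mem_coe, Finset.mem_product, Finset.mem_filter, Finset.mem_univ, true_and, and_true]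
      intro hzero
      apply hiu
      have hcast : Fin.castAdd kB ⟨i.val, hik⟩ = i := by ext; rfl
      rw [← hcast]
      simpa using congrFun hzero ⟨i.val, hik⟩
    · intro u _ u' _ h
      have h1 := congrArg Prod.fst h
      have h2 := congrArg Prod.snd h
      funext i
      by_cases hik : i.val < kA
      · have hcast : Fin.castAdd kB ⟨i.val, hik⟩ = i := by ext; rfl
        have := congrFun h1 ⟨i.val, hik⟩
        simpa [hcast] using this
      · have hk' : i.val - kA < kB := by omega
        have hcast : Fin.natAdd kA ⟨i.val - kA, hk'⟩ = i := by
          apply Fin.ext; show kA + (i.val - kA) = i.val; omega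
        have := congrFun h2 ⟨i.val - kA, hk'⟩
        simpa [hcast] using this
  -- cardinality of UB
  have hUBcard : UB.card ≤ 2 ^ kB - 1 := by
    have : (2 : ℕ) ^ kB - 1 =
        (Finset.univ.filter (fun a : Fin kB → ZMod 2 => a ≠ 0)).card := by
      rw [Finset.filter_ne', Finset.card_erase_of_mem (Finset.mem_univ 0)]
      simp [Fintype.card_fun, ZMod.card]
    rw [this]
    apply Finset.card_le_card_of_injOn (fun u => fun i : Fin kB => u (Fin.natAdd kA i))
    · intro u hu
      rw [hUB] at hu
      simp only [Finset.mem_coe, Finset.mem_filter, Finset.mem_univ, true_and] at hu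
      obtain ⟨hune, hnot⟩ := hu
      simp only [Finset.mem_coe, Finset.mem_filter, Finset.mem_univ, true_and]
      intro hzero
      apply hune
      funext i
      by_cases hik : i.val < kA
      · by_contra hne
        exact hnot ⟨i, hik, hne⟩
      · have hk' : i.val - kA < kB := by omega
        have hcast : Fin.natAdd kA ⟨i.val - kA, hk'⟩ = i := by apply Fin.ext; show kA + (i.val - kA) = i.val; omega
        have := congrFun hzero ⟨i.val - kA, hk'⟩
        simpa [hcast] using this
    · intro u hu u' hu' h
      rw [hUB] at hu hu'
      simp only [Finset.mem_coe, Finset.mem_filter, Finset.mem_univ, true_and] at hu hu'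
      funext i
      by_cases hik : i.val < kA
      · have h1 : u i = 0 := by by_contra hne; exact hu.2 ⟨i, hik, hne⟩
        have h2 : u' i = 0 := by by_contra hne; exact hu'.2 ⟨i, hik, hne⟩
        rw [h1, h2]
      · have hk' : i.val - kA < kB := by omega
        have hcast : Fin.natAdd kA ⟨i.val - kA, hk'⟩ = i := by apply Fin.ext; show kA + (i.val - kA) = i.val; omega
        have := congrFun h ⟨i.val - kA, hk'⟩
        simpa [hcast] using this
  -- bound on Bad
  have hMbA : ∀ u ∈ UA, (Mb u dA).card ≤ 2 ^ ((kA + kB - 1) * n) * V n dA := by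
    intro u hu
    rw [hUA] at hu
    simp only [Finset.mem_filter, Finset.mem_univ, true_and] at hu
    obtain ⟨i, -, hiu⟩ := hu
    exact bad_card_le _ n dA u i hiu
  have hMbB : ∀ u ∈ UB, (Mb u dB).card ≤ 2 ^ ((kA + kB - 1) * n) * V n dB := by
    intro u hu
    rw [hUB] at hu
    simp only [Finset.mem_filter, Finset.mem_univ, true_and] at hu
    obtain ⟨i, hiu⟩ := Function.ne_iff.mp hu.1
    exact bad_card_le _ n dB u i hiu
  have hBadCard : Bad.card < 2 ^ ((kA + kB) * n) := by
    have h1 : Bad.card ≤ UA.card * (2 ^ ((kA + kB - 1) * n) * V n dA)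
        + UB.card * (2 ^ ((kA + kB - 1) * n) * V n dB) := by
      refine le_trans (Finset.card_union_le _ _) (Nat.add_le_add ?_ ?_)
      · exact Finset.card_biUnion_le_card_mul _ _ _ hMbA
      · exact Finset.card_biUnion_le_card_mul _ _ _ hMbB
    have h2 : UA.card * (2 ^ ((kA + kB - 1) * n) * V n dA)
        + UB.card * (2 ^ ((kA + kB - 1) * n) * V n dB)
        ≤ 2 ^ ((kA + kB - 1) * n) *
            (2 ^ kB * (2 ^ kA - 1) * V n dA + (2 ^ kB - 1) * V n dB) := by
      rw [Nat.mul_add]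
      refine Nat.add_le_add ?_ ?_
      · calc UA.card * (2 ^ ((kA + kB - 1) * n) * V n dA)
            ≤ ((2 ^ kA - 1) * 2 ^ kB) * (2 ^ ((kA + kB - 1) * n) * V n dA) :=
              Nat.mul_le_mul_right _ hUAcard
          _ = 2 ^ ((kA + kB - 1) * n) * (2 ^ kB * (2 ^ kA - 1) * V n dA) := by ring
      · calc UB.card * (2 ^ ((kA + kB - 1) * n) * V n dB)
            ≤ (2 ^ kB - 1) * (2 ^ ((kA + kB - 1) * n) * V n dB) :=
              Nat.mul_le_mul_right _ hUBcard
          _ = 2 ^ ((kA + kB - 1) * n) * ((2 ^ kB - 1) * V n dB) := by ring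
    have h3 : 2 ^ ((kA + kB - 1) * n) *
          (2 ^ kB * (2 ^ kA - 1) * V n dA + (2 ^ kB - 1) * V n dB)
        < 2 ^ ((kA + kB - 1) * n) * 2 ^ n :=
      Nat.mul_lt_mul_of_pos_left hsize (Nat.pow_pos (by norm_num))
    have h4 : 2 ^ ((kA + kB - 1) * n) * 2 ^ n = 2 ^ ((kA + kB) * n) := by
      obtain ⟨m', hm'⟩ : ∃ m', kA + kB = m' + 1 := ⟨kA + kB - 1, by omega⟩
      rw [hm', Nat.add_sub_cancel, Nat.succ_mul, pow_add]
    omega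
  -- pick a good matrix
  have hexists : ∃ G : Matrix (Fin (kA+kB)) (Fin n) (ZMod 2), G ∉ Bad := by
    by_contra hc
    push_neg at hc
    have hsub : (Finset.univ : Finset (Matrix (Fin (kA+kB)) (Fin n) (ZMod 2))) ⊆ Bad :=
      fun G _ => hc G
    have := Finset.card_le_card hsub
    rw [Finset.card_univ] at this
    have hcardM : Fintype.card (Matrix (Fin (kA+kB)) (Fin n) (ZMod 2))
        = 2 ^ ((kA + kB) * n) := by
      show Fintype.card (Fin (kA+kB) → Fin n → ZMod 2) = _
      rw [Fintype.card_fun, Fintype.card_fun, ZMod.card, Fintype.card_fin, Fintype.card_fin,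
        ← pow_mul, mul_comm n (kA+kB)]
    omega
  obtain ⟨G, hG⟩ := hexists
  rw [hBad, Finset.mem_union, not_or] at hG
  obtain ⟨hGA, hGB⟩ := hG
  refine ⟨G, fun u hu => ⟨?_, ?_⟩⟩
  · intro hex
    have huA : u ∈ UA := by rw [hUA]; simp only [Finset.mem_filter, Finset.mem_univ, true_and]; exact hex
    have : G ∉ Mb u dA := fun hmem => hGA (Finset.mem_biUnion.mpr ⟨u, huA, hmem⟩)
    rw [hMb] at this
    simp only [Finset.mem_filter, Finset.mem_univ, true_and, not_le] at this
    omega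
  · intro hnex
    have huB : u ∈ UB := by
      rw [hUB]; simp only [Finset.mem_filter, Finset.mem_univ, true_and]; exact ⟨hu, hnex⟩
    have : G ∉ Mb u dB := fun hmem => hGB (Finset.mem_biUnion.mpr ⟨u, huB, hmem⟩)
    rw [hMb] at this
    simp only [Finset.mem_filter, Finset.mem_univ, true_and, not_le] at this
    omega
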